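/- arXiv:1810.12861 — 2 statements merged into one kernel-verified Lean document; each statement's English description precedes it below -/
import Mathlib

section
/- Let N be a finite ground set, (N, 𝓜) a matroid of rank K, Z a monotone, submodular, normalized set function on N, c ∈ [0,1] a curvature bound for Z, and g a greedy sequence for (Z, 𝓜) with output G. Then for every Ω ∈ 𝓜 one has (1 + c)·Z(G) ≥ Z(Ω); equivalently, Z(G)/Z(Ω) ≥ 1/(1+c) whenever Z(Ω) > 0. -/
open Finset

/-- Marginal gain of adding `q` to `S`: `ρ_q(S) = Z(S ∪ {q}) − Z(S)`. -/
def marg {α : Type*} [DecidableEq α] (Z : Finset α → ℝ) (q : α) (S : Finset α) : ℝ :=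
  Z (insert q S) - Z S

/-- The set `{g 1, …, g i}` of the first `i` elements of the sequence `g`. -/
def initSeg {α : Type*} [DecidableEq α] (g : ℕ → α) (i : ℕ) : Finset α :=
  (Finset.Icc 1 i).image g

lemma tele_aux (f : ℕ → ℝ) (n : ℕ) :
    ∑ i ∈ Finset.Icc 1 n, (f i - f (i-1)) = f n - f 0 := by
  induction n with
  | zero => simp
  | succ n ih =>
    rw [show Finset.Icc 1 (n+1) = insert (n+1) (Finset.Icc 1 n) by
      ext x; simp only [Finset.mem_Icc, Finset.mem_insert]; omega]
    rw [Finset.sum_insert (by simp), ih]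
    simp only [Nat.add_sub_cancel]
    ring

lemma initSeg_zero {α : Type*} [DecidableEq α] (g : ℕ → α) : initSeg g 0 = ∅ := by
  simp [initSeg]

lemma initSeg_mono {α : Type*} [DecidableEq α] (g : ℕ → α) {i j : ℕ} (h : i ≤ j) :
    initSeg g i ⊆ initSeg g j :=
  Finset.image_subset_image (Finset.Icc_subset_Icc le_rfl h)

lemma initSeg_succ {α : Type*} [DecidableEq α] (g : ℕ → α) {i : ℕ} (hi : 1 ≤ i) :
    initSeg g i = insert (g i) (initSeg g (i-1)) := by
  unfold initSeg
  rw [show Finset.Icc 1 i = insert i (Finset.Icc 1 (i-1)) by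
    ext x; simp only [Finset.mem_Icc, Finset.mem_insert]; omega]
  rw [Finset.image_insert]

lemma mem_initSeg {α : Type*} [DecidableEq α] {g : ℕ → α} {i : ℕ} {x : α} :
    x ∈ initSeg g i ↔ ∃ k, 1 ≤ k ∧ k ≤ i ∧ g k = x := by
  simp [initSeg, Finset.mem_image, Finset.mem_Icc, and_assoc]

/-- Curvature-dependent guarantee: `Z(Ω) ≤ (1 + c)·Z(G)`. -/
theorem greedy_curvature_approx {α : Type*} [DecidableEq α]
    (N : Finset α) (M : Finset α → Prop)
    (hM_ground : ∀ S, M S → S ⊆ N) (hM_empty : M ∅)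
    (hM_down : ∀ S T : Finset α, M T → S ⊆ T → M S)
    (hM_aug : ∀ S T : Finset α, M S → M T → S.card < T.card → ∃ x ∈ T \ S, M (insert x S))
    (K : ℕ) (hK_le : ∀ S, M S → S.card ≤ K) (hK_ex : ∃ B, M B ∧ B.card = K)
    (Z : Finset α → ℝ)
    (hZ_mono : ∀ S T : Finset α, S ⊆ T → T ⊆ N → Z S ≤ Z T)
    (hZ_submod : ∀ S T : Finset α, ∀ x, S ⊆ T → T ⊆ N → x ∈ N → x ∉ T →
      Z (insert x T) - Z T ≤ Z (insert x S) - Z S)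
    (hZ_empty : Z ∅ = 0)
    (c : ℝ) (hc0 : 0 ≤ c) (hc1 : c ≤ 1)
    (hcurv : ∀ S ⊆ N, ∀ j ∈ N, j ∉ S → 0 < marg Z j (∅ : Finset α) →
      (1 - c) * marg Z j (∅ : Finset α) ≤ marg Z j S)
    (g : ℕ → α) (hg_inj : Set.InjOn g (Set.Icc 1 K)) (hG_M : M (initSeg g K))
    (hg_max : ∀ i ∈ Finset.Icc 1 K, ∀ x ∈ N, x ∉ initSeg g (i - 1) →
      M (insert x (initSeg g (i - 1))) →
      marg Z x (initSeg g (i - 1)) ≤ marg Z (g i) (initSeg g (i - 1)))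
 :
    ∀ Ω : Finset α, M Ω → Z Ω ≤ (1 + c) * Z (initSeg g K) := by
  classical
  intro Ω hΩ
  set G := initSeg g K with hGdef
  have hΩN : Ω ⊆ N := hM_ground Ω hΩ
  have hGN : G ⊆ N := hM_ground G hG_M
  have hsub : ∀ i, i ≤ K → initSeg g i ⊆ G := fun i hi => initSeg_mono g hi
  have hsubN : ∀ i, i ≤ K → initSeg g i ⊆ N := fun i hi => (hsub i hi).trans hGN
  have hsegM : ∀ i, i ≤ K → M (initSeg g i) := fun i hi => hM_down _ _ hG_M (hsub i hi)
  have hgiG : ∀ i, 1 ≤ i → i ≤ K → g i ∈ G := by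
    intro i h1 h2; exact mem_initSeg.mpr ⟨i, h1, h2, rfl⟩
  have hgiN : ∀ i, 1 ≤ i → i ≤ K → g i ∈ N := fun i h1 h2 => hGN (hgiG i h1 h2)
  have hginot : ∀ i, 1 ≤ i → i ≤ K → g i ∉ initSeg g (i-1) := by
    intro i h1 h2 hmem
    obtain ⟨k, hk1, hk2, hk3⟩ := mem_initSeg.mp hmem
    have : k = i := hg_inj ⟨hk1, by omega⟩ ⟨h1, h2⟩ hk3
    omega
  have hcard : ∀ m, m ≤ K → (initSeg g m).card = m := by
    intro m hm
    rw [initSeg, Finset.card_image_of_injOn, Nat.card_Icc]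
    · omega
    · intro a ha b hb hab
      simp only [Finset.coe_Icc, Set.mem_Icc] at ha hb
      exact hg_inj ⟨ha.1, le_trans ha.2 hm⟩ ⟨hb.1, le_trans hb.2 hm⟩ hab
  have marg_nonneg : ∀ x ∈ N, ∀ S ⊆ N, 0 ≤ marg Z x S := by
    intro x hx S hS
    have := hZ_mono S (insert x S) (Finset.subset_insert x S)
      (Finset.insert_subset hx hS)
    simp only [marg]; linarith
  -- ρ i
  set ρ : ℕ → ℝ := fun i => marg Z (g i) (initSeg g (i-1)) with hρdef
  have hρ_nonneg : ∀ i ∈ Finset.Icc 1 K, 0 ≤ ρ i := by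
    intro i hi
    rw [Finset.mem_Icc] at hi
    exact marg_nonneg _ (hgiN i hi.1 hi.2) _ (hsubN (i-1) (by omega))
  have hZG : Z G = ∑ i ∈ Finset.Icc 1 K, ρ i := by
    have : ∑ i ∈ Finset.Icc 1 K, ρ i
        = ∑ i ∈ Finset.Icc 1 K, ((fun n => Z (initSeg g n)) i - (fun n => Z (initSeg g n)) (i-1)) := by
      apply Finset.sum_congr rfl
      intro i hi
      rw [Finset.mem_Icc] at hi
      simp only [hρdef, marg, ← initSeg_succ g hi.1]
    rw [this, tele_aux]
    simp [initSeg_zero, hZ_empty, hGdef]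
  -- telescoping for Ω ∪ G
  have hZΩG : Z (Ω ∪ G) - Z Ω
      = ∑ i ∈ Finset.Icc 1 K, marg Z (g i) (Ω ∪ initSeg g (i-1)) := by
    have : ∑ i ∈ Finset.Icc 1 K, marg Z (g i) (Ω ∪ initSeg g (i-1))
        = ∑ i ∈ Finset.Icc 1 K,
            ((fun n => Z (Ω ∪ initSeg g n)) i - (fun n => Z (Ω ∪ initSeg g n)) (i-1)) := by
      apply Finset.sum_congr rfl
      intro i hi
      rw [Finset.mem_Icc] at hi
      simp only [marg, ← Finset.union_insert, ← initSeg_succ g hi.1]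
    rw [this, tele_aux]
    simp [initSeg_zero, hGdef]
  -- the "free" steps
  set T : Finset ℕ := (Finset.Icc 1 K).filter (fun i => g i ∉ Ω) with hTdef
  have hT_sub : T ⊆ Finset.Icc 1 K := Finset.filter_subset _ _
  -- lower bound
  have hlower : Z Ω + (1-c) * ∑ i ∈ T, ρ i ≤ Z (Ω ∪ G) := by
    have h1 : ∀ i ∈ T, (1-c) * ρ i ≤ marg Z (g i) (Ω ∪ initSeg g (i-1)) := by
      intro i hi
      rw [hTdef, Finset.mem_filter, Finset.mem_Icc] at hi
      obtain ⟨⟨hi1, hiK⟩, hgΩ⟩ := hi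
      have hxN : g i ∈ N := hgiN i hi1 hiK
      have hSN : Ω ∪ initSeg g (i-1) ⊆ N := Finset.union_subset hΩN (hsubN (i-1) (by omega))
      have hnotmem : g i ∉ Ω ∪ initSeg g (i-1) := by
        rw [Finset.mem_union]; push_neg
        exact ⟨hgΩ, hginot i hi1 hiK⟩
      have hρle : ρ i ≤ marg Z (g i) (∅ : Finset α) := by
        have := hZ_submod ∅ (initSeg g (i-1)) (g i) (Finset.empty_subset _)
          (hsubN (i-1) (by omega)) hxN (hginot i hi1 hiK)
        simp only [hρdef, marg]; linarith
      by_cases hpos : 0 < marg Z (g i) (∅ : Finset α)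
      · have hcv := hcurv (Ω ∪ initSeg g (i-1)) hSN (g i) hxN hnotmem hpos
        have h1c : (0:ℝ) ≤ 1 - c := by linarith
        nlinarith
      · push_neg at hpos
        have hmn := marg_nonneg (g i) hxN (Ω ∪ initSeg g (i-1)) hSN
        have h1c : (0:ℝ) ≤ 1 - c := by linarith
        nlinarith
    have h2 : ∑ i ∈ T, (1-c) * ρ i ≤ ∑ i ∈ T, marg Z (g i) (Ω ∪ initSeg g (i-1)) :=
      Finset.sum_le_sum h1
    have h3 : ∑ i ∈ T, marg Z (g i) (Ω ∪ initSeg g (i-1))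
        ≤ ∑ i ∈ Finset.Icc 1 K, marg Z (g i) (Ω ∪ initSeg g (i-1)) := by
      apply Finset.sum_le_sum_of_subset_of_nonneg hT_sub
      intro i hi _
      rw [Finset.mem_Icc] at hi
      exact marg_nonneg _ (hgiN i hi.1 hi.2) _
        (Finset.union_subset hΩN (hsubN (i-1) (by omega)))
    rw [Finset.mul_sum] at *
    linarith [hZΩG]
  -- upper bound, part 1: submodular expansion
  have hupper1 : ∀ F : Finset α, F ⊆ N → Z (G ∪ F) ≤ Z G + ∑ j ∈ F, marg Z j G := by
    intro F
    induction F using Finset.induction_on with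
    | empty => intro _; simp
    | @insert a F ha ih =>
      intro hins
      have haN : a ∈ N := hins (Finset.mem_insert_self a F)
      have hFN : F ⊆ N := (Finset.subset_insert a F).trans hins
      rw [Finset.union_insert, Finset.sum_insert ha]
      have ihF := ih hFN
      by_cases hmem : a ∈ G ∪ F
      · rw [Finset.insert_eq_self.mpr hmem]
        have := marg_nonneg a haN G hGN
        linarith
      · have hs := hZ_submod G (G ∪ F) a Finset.subset_union_left
          (Finset.union_subset hGN hFN) haN hmem
        simp only [marg] at *
        linarith
  -- Hall's theorem setup
  set mj : α → ℕ := fun j => Nat.findGreatest (fun i => M (insert j (initSeg g (i-1)))) K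
    with hmjdef
  have hK1 : ∀ j ∈ Ω \ G, 1 ≤ K := by
    intro j hj
    rw [Finset.mem_sdiff] at hj
    have : M {j} := hM_down {j} Ω hΩ (Finset.singleton_subset_iff.mpr hj.1)
    have := hK_le {j} this
    simpa using this
  have hmj1 : ∀ j ∈ Ω \ G, 1 ≤ mj j := by
    intro j hj
    apply Nat.le_findGreatest (hK1 j hj)
    rw [Finset.mem_sdiff] at hj
    simp only [Nat.sub_self, initSeg_zero]
    exact hM_down _ Ω hΩ (by simp [hj.1])
  have hmjK : ∀ j, mj j ≤ K := fun j => Nat.findGreatest_le K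
  have hmjspec : ∀ j ∈ Ω \ G, M (insert j (initSeg g (mj j - 1))) := by
    intro j hj
    have hP1 : M (insert j (initSeg g (1 - 1))) := by
      rw [Finset.mem_sdiff] at hj
      simp only [Nat.sub_self, initSeg_zero]
      exact hM_down _ Ω hΩ (by simp [hj.1])
    exact Nat.findGreatest_spec (P := fun i => M (insert j (initSeg g (i - 1))))
      (hK1 j hj) hP1
  have hmjmax : ∀ j ∈ Ω \ G, ∀ t, mj j ≤ t → ¬ M (insert j (initSeg g t)) := by
    intro j hj t ht hMt
    rw [Finset.mem_sdiff] at hj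
    by_cases htK : t < K
    · have hrfl : mj j = Nat.findGreatest (fun i => M (insert j (initSeg g (i - 1)))) K := rfl
      have := Nat.findGreatest_is_greatest (P := fun i => M (insert j (initSeg g (i - 1))))
        (n := K) (k := t+1) (by omega) (by omega)
      simp only [Nat.add_sub_cancel] at this
      exact this hMt
    · push_neg at htK
      have hsub2 : insert j G ⊆ insert j (initSeg g t) :=
        Finset.insert_subset_insert _ (initSeg_mono g htK)
      have hMG : M (insert j G) := hM_down _ _ hMt hsub2
      have hcardG : (insert j G).card = K + 1 := by
        rw [Finset.card_insert_of_notMem hj.2, hcard K le_rfl]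
      have := hK_le _ hMG
      omega
  set tset : ↥(Ω \ G) → Finset ℕ :=
    fun j => (Finset.Icc 1 (mj ↑j)).filter (fun i => g i ∉ Ω) with htsetdef
  have hall : ∀ s : Finset ↥(Ω \ G), s.card ≤ (s.biUnion tset).card := by
    intro s
    rcases s.eq_empty_or_nonempty with rfl | hs
    · simp
    obtain ⟨j0, hj0s, hj0max⟩ := Finset.exists_max_image s (fun j => mj ↑j) hs
    set m := mj ↑j0 with hmdef
    have hmK : m ≤ K := hmjK _
    have hbU : s.biUnion tset = tset j0 := by
      apply Finset.Subset.antisymm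
      · apply Finset.biUnion_subset.mpr
        intro j hj
        apply Finset.filter_subset_filter
        exact Finset.Icc_subset_Icc le_rfl (hj0max j hj)
      · exact Finset.subset_biUnion_of_mem tset hj0s
    rw [hbU]
    -- counting argument
    set W : Finset α := s.image Subtype.val with hWdef
    have hWcard : W.card = s.card := Finset.card_image_of_injective s Subtype.val_injective
    have hWsub : W ⊆ Ω \ G := by
      intro x hx
      obtain ⟨j, _, rfl⟩ := Finset.mem_image.mp hx
      exact j.2
    set Q : Finset ℕ := (Finset.Icc 1 m).filter (fun i => g i ∈ Ω) with hQdef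
    set Qg : Finset α := Q.image g with hQgdef
    have hQg_card : Qg.card = Q.card := by
      apply Finset.card_image_of_injOn
      intro a ha b hb hab
      have ha' := (Finset.mem_filter.mp ha).1
      have hb' := (Finset.mem_filter.mp hb).1
      rw [Finset.mem_Icc] at ha' hb'
      exact hg_inj ⟨ha'.1, le_trans ha'.2 hmK⟩ ⟨hb'.1, le_trans hb'.2 hmK⟩ hab
    have hQg_seg : Qg ⊆ initSeg g m := by
      intro x hx
      obtain ⟨i, hi, rfl⟩ := Finset.mem_image.mp hx
      have := (Finset.mem_filter.mp hi).1
      rw [Finset.mem_Icc] at this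
      exact mem_initSeg.mpr ⟨i, this.1, this.2, rfl⟩
    have hQgΩ : Qg ⊆ Ω := by
      intro x hx
      obtain ⟨i, hi, rfl⟩ := Finset.mem_image.mp hx
      exact (Finset.mem_filter.mp hi).2
    set S : Finset α := W ∪ Qg with hSdef
    have hSΩ : S ⊆ Ω := Finset.union_subset (fun x hx => (Finset.mem_sdiff.mp (hWsub hx)).1) hQgΩ
    have hdisj : Disjoint W Qg := by
      apply Finset.disjoint_left.mpr
      intro x hxW hxQ
      exact (Finset.mem_sdiff.mp (hWsub hxW)).2 ((hsub m hmK) (hQg_seg hxQ))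
    have hScard : S.card = W.card + Q.card := by
      rw [hSdef, Finset.card_union_of_disjoint hdisj, hQg_card]
    have hSM : M S := hM_down S Ω hΩ hSΩ
    have hSle : S.card ≤ m := by
      by_contra hlt
      push_neg at hlt
      have hmcard : (initSeg g m).card = m := hcard m hmK
      obtain ⟨x, hx, hxM⟩ := hM_aug (initSeg g m) S (hsegM m hmK) hSM (by omega)
      rw [Finset.mem_sdiff] at hx
      rcases Finset.mem_union.mp hx.1 with hxW | hxQ
      · obtain ⟨j, hjs, rfl⟩ := Finset.mem_image.mp hxW
        exact hmjmax ↑j j.2 m (hj0max j hjs) hxM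
      · exact hx.2 (hQg_seg hxQ)
    -- now count the target
    have htarget : (tset j0).card + Q.card = m := by
      have hc2 := Finset.card_filter_add_card_filter_not
        (s := Finset.Icc 1 m) (p := fun i => g i ∉ Ω)
      rw [Nat.card_Icc] at hc2
      have hQeq : (Finset.Icc 1 m).filter (fun a => ¬ g a ∉ Ω) = Q := by
        apply Finset.filter_congr
        intro i _
        simp
      rw [hQeq] at hc2
      have hts : tset j0 = (Finset.Icc 1 m).filter (fun i => g i ∉ Ω) := rfl
      rw [hts]
      omega
    omega
  obtain ⟨f, hf_inj, hf_mem⟩ :=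
    (Finset.all_card_le_biUnion_card_iff_existsInjective' tset).mp hall
  -- per-element bound
  have hperel : ∀ j : ↥(Ω \ G), marg Z ↑j G ≤ ρ (f j) := by
    intro j
    have hjmem := j.2
    rw [Finset.mem_sdiff] at hjmem
    have hjN : ↑j ∈ N := hΩN hjmem.1
    have hfm := hf_mem j
    rw [htsetdef, Finset.mem_filter, Finset.mem_Icc] at hfm
    obtain ⟨⟨hi1, hi2⟩, _⟩ := hfm
    set i := f j with hidef
    have hiK : i ≤ K := le_trans hi2 (hmjK ↑j)
    have hjseg : ↑j ∉ initSeg g (i-1) := fun h => hjmem.2 (hsub (i-1) (by omega) h)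
    have hstep2 : M (insert ↑j (initSeg g (i-1))) := by
      apply hM_down _ _ (hmjspec ↑j j.2)
      exact Finset.insert_subset_insert _ (initSeg_mono g (by omega))
    have hstep3 := hg_max i (Finset.mem_Icc.mpr ⟨hi1, hiK⟩) ↑j hjN hjseg hstep2
    have hstep1 : marg Z ↑j G ≤ marg Z ↑j (initSeg g (i-1)) := by
      have := hZ_submod (initSeg g (i-1)) G ↑j (hsub (i-1) (by omega)) hGN hjN hjmem.2
      simp only [marg]; linarith
    exact le_trans hstep1 hstep3
  -- image of f is inside T
  have himg : ∀ j : ↥(Ω \ G), f j ∈ T := by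
    intro j
    have hfm := hf_mem j
    rw [htsetdef, Finset.mem_filter, Finset.mem_Icc] at hfm
    rw [hTdef, Finset.mem_filter, Finset.mem_Icc]
    exact ⟨⟨hfm.1.1, le_trans hfm.1.2 (hmjK ↑j)⟩, hfm.2⟩
  -- upper bound part 2
  have hupper2 : ∑ j ∈ Ω \ G, marg Z j G ≤ ∑ i ∈ T, ρ i := by
    rw [← Finset.sum_attach (Ω \ G) (fun j => marg Z j G)]
    calc ∑ j ∈ (Ω \ G).attach, marg Z ↑j G
        ≤ ∑ j ∈ (Ω \ G).attach, ρ (f j) := Finset.sum_le_sum (fun j _ => hperel j)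
      _ = ∑ i ∈ (Ω \ G).attach.image f, ρ i := by
          rw [Finset.sum_image (fun a _ b _ h => hf_inj h)]
      _ ≤ ∑ i ∈ T, ρ i := by
          apply Finset.sum_le_sum_of_subset_of_nonneg
          · intro i hi
            obtain ⟨j, _, rfl⟩ := Finset.mem_image.mp hi
            exact himg j
          · intro i hi _
            exact hρ_nonneg i (hT_sub hi)
  -- combine
  have hA_le : ∑ i ∈ T, ρ i ≤ Z G := by
    rw [hZG]
    exact Finset.sum_le_sum_of_subset_of_nonneg hT_sub (fun i hi _ => hρ_nonneg i hi)
  have hunion : G ∪ (Ω \ G) = Ω ∪ G := by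
    rw [Finset.union_sdiff_self_eq_union, Finset.union_comm]
  have hupper : Z (Ω ∪ G) ≤ Z G + ∑ i ∈ T, ρ i := by
    have := hupper1 (Ω \ G) (fun x hx => hΩN (Finset.mem_sdiff.mp hx).1)
    rw [hunion] at this
    linarith [hupper2]
  set A := ∑ i ∈ T, ρ i with hAdef
  have hexp : (1-c) * A = A - c * A := by ring
  have hcA : c * A ≤ c * Z G := mul_le_mul_of_nonneg_left hA_le hc0
  linarith
end

section
/- Let U be a finite set of users and R a finite set of n resources with monotone, submodular, normalized valuations Z_u for each u ∈ U, and let the resources arrive in an arbitrary fixed order r_1, …, r_n. Let u_1, …, u_n be an online greedy allocation with partial allocations G^t, output G, and increments ρ_t = ρ^{u_t}_{r_t}(G^{t−1}). For each t ∈ {1,…,n} let c_t ∈ [0,1] be a curvature bound for Z_{u_t}, and let d_t ≥ 1 be a real number such that d_t·ρ^{u'}_{r_t}(G^{t−1}) ≤ ρ_t for every user u' ∈ U ∖ {u_t} (so d_t is a lower bound on the online discriminant at time t). Set Λ = max_{1 ≤ t ≤ n} (c_t + 1/d_t). Then for every full allocation Ω, max(1, Λ)·Z(G) ≥ Z(Ω);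 equivalently, Z(G)/Z(Ω) ≥ min(1, 1/Λ) whenever Z(Ω) > 0. -/
open Finset

/-- The set of resources allocated to user `u` by the allocation `S`. -/
def allocOf {β γ : Type*} [DecidableEq β] [DecidableEq γ]
    (S : Finset (β × γ)) (u : β) : Finset γ :=
  (S.filter fun p => p.1 = u).image Prod.snd

/-- Total valuation `Z(S) = Σ_{u ∈ U} Z_u(S_u)`. -/
def totalVal {β γ : Type*} [DecidableEq β] [DecidableEq γ]
    (U : Finset β) (Zu : β → Finset γ → ℝ) (S : Finset (β × γ)) : ℝ :=
  ∑ u ∈ U, Zu u (allocOf S u)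

/-- Marginal gain `ρ^u_r(S) = Z_u(S_u ∪ {r}) − Z_u(S_u)`. -/
def margP {β γ : Type*} [DecidableEq β] [DecidableEq γ]
    (Zu : β → Finset γ → ℝ) (u : β) (r : γ) (S : Finset (β × γ)) : ℝ :=
  Zu u (insert r (allocOf S u)) - Zu u (allocOf S u)

/-- The partial allocation `{(u 1, r 1), …, (u i, r i)}`. -/
def gAlloc {β γ : Type*} [DecidableEq β] [DecidableEq γ]
    (u : ℕ → β) (r : ℕ → γ) (i : ℕ) : Finset (β × γ) :=
  (Finset.Icc 1 i).image fun j => (u j, r j)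

/-- A partial allocation: each resource occurs in at most one pair. -/
def IsPartialAlloc {β γ : Type*} (U : Finset β) (R : Finset γ) (S : Finset (β × γ)) : Prop :=
  (∀ p ∈ S, p.1 ∈ U ∧ p.2 ∈ R) ∧ ∀ p ∈ S, ∀ q ∈ S, p.2 = q.2 → p = q

/-- A full allocation: every resource occurs in exactly one pair. -/
def IsFullAlloc {β γ : Type*} (U : Finset β) (R : Finset γ) (S : Finset (β × γ)) : Prop :=
  IsPartialAlloc U R S ∧ ∀ r ∈ R, ∃ u, (u, r) ∈ S

section aux
variable {β γ : Type*} [DecidableEq β] [DecidableEq γ]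

lemma mem_allocOf_gAlloc {u : ℕ → β} {r : ℕ → γ} {i : ℕ} {u0 : β} {x : γ} :
    x ∈ allocOf (gAlloc u r i) u0 ↔ ∃ j, (1 ≤ j ∧ j ≤ i) ∧ u j = u0 ∧ r j = x := by
  constructor
  · intro hx
    rw [allocOf, Finset.mem_image] at hx
    obtain ⟨p, hp, hpx⟩ := hx
    rw [Finset.mem_filter] at hp
    obtain ⟨hpG, hpu⟩ := hp
    rw [gAlloc, Finset.mem_image] at hpG
    obtain ⟨j, hj, hjp⟩ := hpG
    rw [Finset.mem_Icc] at hj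
    refine ⟨j, hj, ?_, ?_⟩
    · rw [← hjp] at hpu; exact hpu
    · rw [← hjp] at hpx; exact hpx
  · rintro ⟨j, ⟨hj1, hj2⟩, hju, hjr⟩
    rw [allocOf, Finset.mem_image]
    refine ⟨(u j, r j), Finset.mem_filter.mpr ⟨?_, hju⟩, hjr⟩
    rw [gAlloc, Finset.mem_image]
    exact ⟨j, Finset.mem_Icc.mpr ⟨hj1, hj2⟩, rfl⟩

lemma mem_allocOf {Ω : Finset (β × γ)} {u0 : β} {x : γ} :
    x ∈ allocOf Ω u0 ↔ (u0, x) ∈ Ω := by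
  constructor
  · intro hx
    rw [allocOf, Finset.mem_image] at hx
    obtain ⟨p, hp, hpx⟩ := hx
    rw [Finset.mem_filter] at hp
    have : p = (u0, x) := Prod.ext_iff.mpr ⟨hp.2, hpx⟩
    rw [← this]; exact hp.1
  · intro h
    rw [allocOf, Finset.mem_image]
    exact ⟨(u0, x), Finset.mem_filter.mpr ⟨h, rfl⟩, rfl⟩

lemma telescope_upper (Z : Finset γ → ℝ) (R : Finset γ) (f : γ → ℝ) (A : Finset γ)
    (D : Finset γ) :
    Disjoint A D → A ∪ D ⊆ R →
    (∀ x ∈ D, ∀ C : Finset γ, A ⊆ C → C ⊆ R → x ∉ C → Z (insert x C) - Z C ≤ f x) →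
    Z (A ∪ D) ≤ Z A + ∑ x ∈ D, f x := by
  classical
  induction D using Finset.induction_on with
  | empty => intro _ _ _; simp
  | @insert x D' hx ih =>
    intro hdisj hsub hbound
    have hdisj' : Disjoint A D' := hdisj.mono_right (Finset.subset_insert x D')
    have hsub' : A ∪ D' ⊆ R :=
      (Finset.union_subset_union_right (Finset.subset_insert x D')).trans hsub
    have hxC : x ∉ A ∪ D' := by
      simp only [Finset.mem_union]
      rintro (h | h)
      · exact Finset.disjoint_right.mp hdisj (Finset.mem_insert_self x D') h
      · exact hx h
    have h1 : Z (insert x (A ∪ D')) - Z (A ∪ D') ≤ f x :=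
      hbound x (Finset.mem_insert_self x D') (A ∪ D') Finset.subset_union_left hsub' hxC
    have h2 := ih hdisj' hsub'
      (fun y hy C hC1 hC2 hC3 => hbound y (Finset.mem_insert_of_mem hy) C hC1 hC2 hC3)
    rw [Finset.union_insert, Finset.sum_insert hx]
    linarith

lemma telescope_lower (Z : Finset γ → ℝ) (R : Finset γ) (g : γ → ℝ) (A : Finset γ)
    (D : Finset γ) :
    Disjoint A D → A ∪ D ⊆ R →
    (∀ x ∈ D, ∀ C : Finset γ, C ⊆ R → x ∉ C → g x ≤ Z (insert x C) - Z C) →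
    Z A + ∑ x ∈ D, g x ≤ Z (A ∪ D) := by
  classical
  induction D using Finset.induction_on with
  | empty => intro _ _ _; simp
  | @insert x D' hx ih =>
    intro hdisj hsub hbound
    have hdisj' : Disjoint A D' := hdisj.mono_right (Finset.subset_insert x D')
    have hsub' : A ∪ D' ⊆ R :=
      (Finset.union_subset_union_right (Finset.subset_insert x D')).trans hsub
    have hxC : x ∉ A ∪ D' := by
      simp only [Finset.mem_union]
      rintro (h | h)
      · exact Finset.disjoint_right.mp hdisj (Finset.mem_insert_self x D') h
      · exact hx h
    have h1 : g x ≤ Z (insert x (A ∪ D')) - Z (A ∪ D') :=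
      hbound x (Finset.mem_insert_self x D') (A ∪ D') hsub' hxC
    have h2 := ih hdisj' hsub'
      (fun y hy C hC1 hC2 => hbound y (Finset.mem_insert_of_mem hy) C hC1 hC2)
    rw [Finset.union_insert, Finset.sum_insert hx]
    linarith

lemma sum_over_subset {n : ℕ} {r : ℕ → γ}
    (hr_inj : Set.InjOn r (Set.Icc 1 n)) (S : Finset γ)
    (hS : ∀ x ∈ S, ∃ t, t ∈ Finset.Icc 1 n ∧ r t = x) (F : γ → ℝ) :
    ∑ x ∈ S, F x = ∑ t ∈ (Finset.Icc 1 n).filter (fun t => r t ∈ S), F (r t) := by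
  classical
  have hEq : S = ((Finset.Icc 1 n).filter (fun t => r t ∈ S)).image r := by
    apply Finset.Subset.antisymm
    · intro x hx
      obtain ⟨t, ht, hrt⟩ := hS x hx
      exact Finset.mem_image.mpr ⟨t, Finset.mem_filter.mpr ⟨ht, by rw [hrt]; exact hx⟩, hrt⟩
    · intro x hx
      obtain ⟨t, ht, hrt⟩ := Finset.mem_image.mp hx
      rw [← hrt]; exact (Finset.mem_filter.mp ht).2
  conv_lhs => rw [hEq]
  apply Finset.sum_image
  intro a ha b hb hab
  rw [Finset.mem_coe, Finset.mem_filter, Finset.mem_Icc] at ha hb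
  exact hr_inj (Set.mem_Icc.mpr ha.1) (Set.mem_Icc.mpr hb.1) hab

open Classical in
noncomputable def tauOf {γ : Type*} (n : ℕ) (r : ℕ → γ) (x : γ) : ℕ :=
  if h : ∃ t, t ∈ Finset.Icc 1 n ∧ r t = x then h.choose else 0

lemma tauOf_spec {n : ℕ} {r : ℕ → γ} {x : γ}
    (h : ∃ t, t ∈ Finset.Icc 1 n ∧ r t = x) :
    tauOf n r x ∈ Finset.Icc 1 n ∧ r (tauOf n r x) = x := by
  classical
  rw [tauOf]
  rw [dif_pos h]
  exact h.choose_spec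

lemma tauOf_eq {n : ℕ} {r : ℕ → γ} (hr_inj : Set.InjOn r (Set.Icc 1 n))
    {t : ℕ} (ht : t ∈ Finset.Icc 1 n) : tauOf n r (r t) = t := by
  have h : ∃ s, s ∈ Finset.Icc 1 n ∧ r s = r t := ⟨t, ht, rfl⟩
  obtain ⟨hs1, hs2⟩ := tauOf_spec h
  rw [Finset.mem_Icc] at hs1
  rw [Finset.mem_Icc] at ht
  exact hr_inj (Set.mem_Icc.mpr hs1) (Set.mem_Icc.mpr ht) hs2

open Classical in
noncomputable def wOf {β γ : Type*} (Ω : Finset (β × γ)) (dflt : β) (x : γ) : β :=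
  if h : ∃ u', (u', x) ∈ Ω then h.choose else dflt

lemma wOf_spec {Ω : Finset (β × γ)} {dflt : β} {x : γ}
    (h : ∃ u', (u', x) ∈ Ω) : (wOf Ω dflt x, x) ∈ Ω := by
  classical
  rw [wOf]
  rw [dif_pos h]
  exact h.choose_spec

end aux

/-- Discriminant-and-curvature competitive ratio for online greedy on the
submodular partition problem: `Z(Ω) ≤ max(1, Λ)·Z(G)` where `Λ ≥ c_t + 1/d_t` for all `t`. -/
theorem online_greedy_partition_discriminant_approx {β γ : Type*} [DecidableEq β] [DecidableEq γ]
    (U : Finset β) (R : Finset γ) (n : ℕ) (hn : R.card = n)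
    (Zu : β → Finset γ → ℝ)
    (hmono : ∀ u ∈ U, ∀ S T : Finset γ, S ⊆ T → T ⊆ R → Zu u S ≤ Zu u T)
    (hsubmod : ∀ u ∈ U, ∀ S T : Finset γ, ∀ x, S ⊆ T → T ⊆ R → x ∈ R → x ∉ T →
      Zu u (insert x T) - Zu u T ≤ Zu u (insert x S) - Zu u S)
    (hzero : ∀ u ∈ U, Zu u (∅ : Finset γ) = 0)
    (u : ℕ → β) (r : ℕ → γ)
    (hu_mem : ∀ t ∈ Finset.Icc 1 n, u t ∈ U)
    (hr_inj : Set.InjOn r (Set.Icc 1 n)) (hr_img : (Finset.Icc 1 n).image r = R)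
    (hgreedy : ∀ t ∈ Finset.Icc 1 n, ∀ u' ∈ U,
      margP Zu u' (r t) (gAlloc u r (t - 1)) ≤ margP Zu (u t) (r t) (gAlloc u r (t - 1)))
    (c : ℕ → ℝ) (hc : ∀ i ∈ Finset.Icc 1 n, 0 ≤ c i ∧ c i ≤ 1)
    (hcurv : ∀ i ∈ Finset.Icc 1 n, ∀ S ⊆ R, ∀ x ∈ R, x ∉ S → 0 < Zu (u i) {x} →
      (1 - c i) * Zu (u i) {x} ≤ Zu (u i) (insert x S) - Zu (u i) S)
    (d : ℕ → ℝ) (hd : ∀ i ∈ Finset.Icc 1 n, 1 ≤ d i)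
    (hdisc : ∀ i ∈ Finset.Icc 1 n, ∀ u' ∈ U, u' ≠ u i →
      d i * margP Zu u' (r i) (gAlloc u r (i - 1)) ≤
        margP Zu (u i) (r i) (gAlloc u r (i - 1)))
    (Λ : ℝ) (hΛ : ∀ i ∈ Finset.Icc 1 n, c i + 1 / d i ≤ Λ)
 :
    ∀ Ω : Finset (β × γ), IsFullAlloc U R Ω →
      totalVal U Zu Ω ≤ max 1 Λ * totalVal U Zu (gAlloc u r n) := by
  classical
  rintro Ω ⟨⟨hΩmem, hΩuniq⟩, hΩfull⟩
  have hrmem : ∀ t ∈ Finset.Icc 1 n, r t ∈ R := fun t ht => by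
    rw [← hr_img]; exact Finset.mem_image_of_mem r ht
  have hGsubR : ∀ i, i ≤ n → ∀ u0 : β, allocOf (gAlloc u r i) u0 ⊆ R := by
    intro i hi u0 x hx
    rw [mem_allocOf_gAlloc] at hx
    obtain ⟨j, ⟨hj1, hj2⟩, _, hjr⟩ := hx
    rw [← hjr]
    exact hrmem j (Finset.mem_Icc.mpr ⟨hj1, le_trans hj2 hi⟩)
  have hGmono : ∀ i i' : ℕ, i ≤ i' → ∀ u0 : β,
      allocOf (gAlloc u r i) u0 ⊆ allocOf (gAlloc u r i') u0 := by
    intro i i' hii u0 x hx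
    rw [mem_allocOf_gAlloc] at hx ⊢
    obtain ⟨j, ⟨hj1, hj2⟩, h3, h4⟩ := hx
    exact ⟨j, ⟨hj1, le_trans hj2 hii⟩, h3, h4⟩
  have hfresh : ∀ t ∈ Finset.Icc 1 n, ∀ u0 : β, r t ∉ allocOf (gAlloc u r (t-1)) u0 := by
    intro t ht u0 hx
    rw [Finset.mem_Icc] at ht
    rw [mem_allocOf_gAlloc] at hx
    obtain ⟨j, ⟨hj1, hj2⟩, _, hjr⟩ := hx
    have : j = t := hr_inj (Set.mem_Icc.mpr ⟨hj1, by omega⟩) (Set.mem_Icc.mpr ⟨ht.1, ht.2⟩) hjr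
    omega
  have hρ0 : ∀ t ∈ Finset.Icc 1 n, 0 ≤ margP Zu (u t) (r t) (gAlloc u r (t-1)) := by
    intro t ht
    have h := hmono (u t) (hu_mem t ht) (allocOf (gAlloc u r (t-1)) (u t))
      (insert (r t) (allocOf (gAlloc u r (t-1)) (u t))) (Finset.subset_insert _ _)
      (Finset.insert_subset (hrmem t ht)
        (hGsubR (t-1) (by rw [Finset.mem_Icc] at ht; omega) (u t)))
    rw [margP]; linarith
  have hρle : ∀ t ∈ Finset.Icc 1 n,
      margP Zu (u t) (r t) (gAlloc u r (t-1)) ≤ Zu (u t) {r t} := by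
    intro t ht
    have h := hsubmod (u t) (hu_mem t ht) ∅ (allocOf (gAlloc u r (t-1)) (u t)) (r t)
      (Finset.empty_subset _) (hGsubR (t-1) (by rw [Finset.mem_Icc] at ht; omega) (u t))
      (hrmem t ht) (hfresh t ht (u t))
    rw [hzero (u t) (hu_mem t ht)] at h
    rw [margP]
    simpa using h
  -- telescoping identity
  have htel : ∀ m, m ≤ n → totalVal U Zu (gAlloc u r m)
      = ∑ t ∈ Finset.Icc 1 m, margP Zu (u t) (r t) (gAlloc u r (t-1)) := by
    intro m
    induction m with
    | zero =>
      intro _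
      have h0 : ∀ u0 : β, allocOf (gAlloc u r 0) u0 = ∅ := by
        intro u0
        ext x
        rw [mem_allocOf_gAlloc]
        simp only [Finset.notMem_empty, iff_false]
        rintro ⟨j, ⟨hj1, hj2⟩, -, -⟩
        omega
      rw [totalVal, show Finset.Icc 1 0 = (∅ : Finset ℕ) by simp, Finset.sum_empty]
      apply Finset.sum_eq_zero
      intro u0 hu0
      rw [h0 u0]
      exact hzero u0 hu0
    | succ m ih =>
      intro hm
      have hm' : m ≤ n := Nat.le_of_succ_le hm
      have hmem : m + 1 ∈ Finset.Icc 1 n := Finset.mem_Icc.mpr ⟨Nat.succ_le_succ (Nat.zero_le m), hm⟩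
      have hupd : ∀ u0 : β, allocOf (gAlloc u r (m+1)) u0 =
          if u (m+1) = u0 then insert (r (m+1)) (allocOf (gAlloc u r m) u0)
          else allocOf (gAlloc u r m) u0 := by
        intro u0
        by_cases h : u (m+1) = u0
        · rw [if_pos h]; ext x
          rw [mem_allocOf_gAlloc, Finset.mem_insert, mem_allocOf_gAlloc]
          constructor
          · rintro ⟨j, ⟨hj1, hj2⟩, hju, hjr⟩
            by_cases hj : j = m+1
            · left; rw [← hjr, hj]
            · right; exact ⟨j, ⟨hj1, by omega⟩, hju, hjr⟩
          · rintro (hx | ⟨j, ⟨hj1, hj2⟩, hju, hjr⟩)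
            · exact ⟨m+1, ⟨by omega, le_refl _⟩, h, hx.symm⟩
            · exact ⟨j, ⟨hj1, by omega⟩, hju, hjr⟩
        · rw [if_neg h]; ext x
          rw [mem_allocOf_gAlloc, mem_allocOf_gAlloc]
          constructor
          · rintro ⟨j, ⟨hj1, hj2⟩, hju, hjr⟩
            have hjne : j ≠ m+1 := by rintro rfl; exact h hju
            exact ⟨j, ⟨hj1, by omega⟩, hju, hjr⟩
          · rintro ⟨j, ⟨hj1, hj2⟩, hju, hjr⟩
            exact ⟨j, ⟨hj1, by omega⟩, hju, hjr⟩
      have hstep : ∀ u0 ∈ U, Zu u0 (allocOf (gAlloc u r (m+1)) u0) =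
          Zu u0 (allocOf (gAlloc u r m) u0) +
          (if u0 = u (m+1) then margP Zu (u (m+1)) (r (m+1)) (gAlloc u r m) else 0) := by
        intro u0 _
        rw [hupd u0]
        by_cases h : u0 = u (m+1)
        · rw [if_pos h.symm, if_pos h, margP, ← h]
          ring
        · rw [if_neg (fun hh => h hh.symm), if_neg h, add_zero]
      have hIcc : Finset.Icc 1 (m+1) = insert (m+1) (Finset.Icc 1 m) := by
        ext j; simp only [Finset.mem_Icc, Finset.mem_insert]; omega
      calc totalVal U Zu (gAlloc u r (m+1))
          = ∑ u0 ∈ U, (Zu u0 (allocOf (gAlloc u r m) u0) +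
            (if u0 = u (m+1) then margP Zu (u (m+1)) (r (m+1)) (gAlloc u r m) else 0)) :=
            Finset.sum_congr rfl hstep
        _ = totalVal U Zu (gAlloc u r m) +
            ∑ u0 ∈ U, (if u0 = u (m+1) then margP Zu (u (m+1)) (r (m+1)) (gAlloc u r m) else 0) := by
            rw [Finset.sum_add_distrib]; rfl
        _ = totalVal U Zu (gAlloc u r m) + margP Zu (u (m+1)) (r (m+1)) (gAlloc u r m) := by
            rw [Finset.sum_ite_eq' U (u (m+1))
              (fun _ => margP Zu (u (m+1)) (r (m+1)) (gAlloc u r m)),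
              if_pos (hu_mem (m+1) hmem)]
        _ = ∑ t ∈ Finset.Icc 1 (m+1), margP Zu (u t) (r t) (gAlloc u r (t-1)) := by
            rw [ih hm', hIcc, Finset.sum_insert (by simp), Nat.add_sub_cancel, add_comm]
  -- Ω facts
  have hwex : ∀ t ∈ Finset.Icc 1 n, ∃ u', (u', r t) ∈ Ω := fun t ht => hΩfull (r t) (hrmem t ht)
  have hw1 : ∀ t ∈ Finset.Icc 1 n, (wOf Ω (u 0) (r t), r t) ∈ Ω := fun t ht => wOf_spec (hwex t ht)
  have hwU : ∀ t ∈ Finset.Icc 1 n, wOf Ω (u 0) (r t) ∈ U := fun t ht => (hΩmem _ (hw1 t ht)).1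
  have hwuniq : ∀ t ∈ Finset.Icc 1 n, ∀ u' : β, (u', r t) ∈ Ω → u' = wOf Ω (u 0) (r t) := by
    intro t ht u' h
    have := hΩuniq (u', r t) h (wOf Ω (u 0) (r t), r t) (hw1 t ht) rfl
    exact congrArg Prod.fst this
  have hΩsubR : ∀ u0 : β, allocOf Ω u0 ⊆ R := by
    intro u0 x hx
    rw [mem_allocOf] at hx
    exact (hΩmem _ hx).2
  have hmemG : ∀ t ∈ Finset.Icc 1 n, ∀ u0 : β,
      (r t ∈ allocOf (gAlloc u r n) u0 ↔ u t = u0) := by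
    intro t ht u0
    rw [mem_allocOf_gAlloc]
    constructor
    · rintro ⟨j, ⟨hj1, hj2⟩, hju, hjr⟩
      have hjt : j = t := hr_inj (Set.mem_Icc.mpr ⟨hj1, hj2⟩)
        (by rw [Finset.mem_Icc] at ht; exact Set.mem_Icc.mpr ht) hjr
      rw [← hjt]; exact hju
    · intro h
      rw [Finset.mem_Icc] at ht
      exact ⟨t, ht, h, rfl⟩
  have hmemΩr : ∀ t ∈ Finset.Icc 1 n, ∀ u0 : β,
      (r t ∈ allocOf Ω u0 ↔ u0 = wOf Ω (u 0) (r t)) := by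
    intro t ht u0
    rw [mem_allocOf]
    exact ⟨hwuniq t ht u0, fun h => by rw [h]; exact hw1 t ht⟩
  -- the two charging functions
  have hFt : ∀ t ∈ Finset.Icc 1 n, ∀ u0 : β,
      margP Zu u0 (r t) (gAlloc u r (tauOf n r (r t) - 1))
        = margP Zu u0 (r t) (gAlloc u r (t-1)) := by
    intro t ht u0
    rw [tauOf_eq hr_inj ht]
  -- per-user key inequality
  have key : ∀ u0 ∈ U,
      Zu u0 (allocOf Ω u0) ≤ Zu u0 (allocOf (gAlloc u r n) u0) +
        ((∑ x ∈ allocOf Ω u0 \ allocOf (gAlloc u r n) u0,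
            margP Zu u0 x (gAlloc u r (tauOf n r x - 1)))
          - ∑ x ∈ allocOf (gAlloc u r n) u0 \ allocOf Ω u0,
              (1 - c (tauOf n r x)) *
                margP Zu (u (tauOf n r x)) (r (tauOf n r x)) (gAlloc u r (tauOf n r x - 1))) := by
    intro u0 hu0
    have hAsub := hΩsubR u0
    have hGsub := hGsubR n le_rfl u0
    have hbound_g : ∀ x ∈ allocOf (gAlloc u r n) u0 \ allocOf Ω u0,
        ∀ C : Finset γ, C ⊆ R → x ∉ C →
          (1 - c (tauOf n r x)) *
              margP Zu (u (tauOf n r x)) (r (tauOf n r x)) (gAlloc u r (tauOf n r x - 1))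
            ≤ Zu u0 (insert x C) - Zu u0 C := by
      intro x hx C hC hxC
      obtain ⟨hxG, _⟩ := Finset.mem_sdiff.mp hx
      obtain ⟨t, ⟨ht1, ht2⟩, hut, hrt⟩ := mem_allocOf_gAlloc.mp hxG
      have htI : t ∈ Finset.Icc 1 n := Finset.mem_Icc.mpr ⟨ht1, ht2⟩
      subst hrt
      subst hut
      rw [tauOf_eq hr_inj htI]
      have hxR : r t ∈ R := hrmem t htI
      by_cases hpos : 0 < Zu (u t) {r t}
      · have hcv := hcurv t htI C hC (r t) hxR hxC hpos
        have h2 : 0 ≤ 1 - c t := by have := (hc t htI).2; linarith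
        calc (1 - c t) * margP Zu (u t) (r t) (gAlloc u r (t-1))
            ≤ (1 - c t) * Zu (u t) {r t} :=
              mul_le_mul_of_nonneg_left (hρle t htI) h2
          _ ≤ Zu (u t) (insert (r t) C) - Zu (u t) C := hcv
      · have hz : margP Zu (u t) (r t) (gAlloc u r (t-1)) = 0 := by
          have h1 := hρle t htI
          have h0 := hρ0 t htI
          push_neg at hpos
          linarith
        rw [hz, mul_zero]
        have := hmono (u t) hu0 C (insert (r t) C) (Finset.subset_insert _ _)
          (Finset.insert_subset hxR hC)
        linarith
    have hbound_f : ∀ x ∈ allocOf Ω u0 \ allocOf (gAlloc u r n) u0,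
        ∀ C : Finset γ, allocOf (gAlloc u r n) u0 ⊆ C → C ⊆ R → x ∉ C →
          Zu u0 (insert x C) - Zu u0 C ≤ margP Zu u0 x (gAlloc u r (tauOf n r x - 1)) := by
      intro x hx C hGC hC hxC
      obtain ⟨hxA, _⟩ := Finset.mem_sdiff.mp hx
      have hxR : x ∈ R := hΩsubR u0 hxA
      rw [← hr_img] at hxR
      obtain ⟨t, htI, hrt⟩ := Finset.mem_image.mp hxR
      subst hrt
      rw [tauOf_eq hr_inj htI, margP]
      exact hsubmod u0 hu0 (allocOf (gAlloc u r (t-1)) u0) C (r t)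
        (Finset.Subset.trans
          (hGmono (t-1) n (by rw [Finset.mem_Icc] at htI; omega) u0) hGC)
        hC (hrmem t htI) hxC
    have hlow := telescope_lower (Zu u0) R
      (fun x => (1 - c (tauOf n r x)) *
        margP Zu (u (tauOf n r x)) (r (tauOf n r x)) (gAlloc u r (tauOf n r x - 1)))
      (allocOf Ω u0) (allocOf (gAlloc u r n) u0 \ allocOf Ω u0)
      Finset.disjoint_sdiff
      (Finset.union_subset hAsub (Finset.Subset.trans Finset.sdiff_subset hGsub))
      hbound_g
    have hup := telescope_upper (Zu u0) R
      (fun x => margP Zu u0 x (gAlloc u r (tauOf n r x - 1)))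
      (allocOf (gAlloc u r n) u0) (allocOf Ω u0 \ allocOf (gAlloc u r n) u0)
      Finset.disjoint_sdiff
      (Finset.union_subset hGsub (Finset.Subset.trans Finset.sdiff_subset hAsub))
      hbound_f
    have hueq : allocOf Ω u0 ∪ (allocOf (gAlloc u r n) u0 \ allocOf Ω u0)
        = allocOf (gAlloc u r n) u0 ∪ (allocOf Ω u0 \ allocOf (gAlloc u r n) u0) := by
      rw [Finset.union_sdiff_self_eq_union, Finset.union_sdiff_self_eq_union, Finset.union_comm]
    rw [hueq] at hlow
    linarith
  -- summing the per-user inequality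
  have hsum1 : totalVal U Zu Ω ≤ totalVal U Zu (gAlloc u r n) +
      ∑ u0 ∈ U, ((∑ x ∈ allocOf Ω u0 \ allocOf (gAlloc u r n) u0,
          margP Zu u0 x (gAlloc u r (tauOf n r x - 1)))
        - ∑ x ∈ allocOf (gAlloc u r n) u0 \ allocOf Ω u0,
            (1 - c (tauOf n r x)) *
              margP Zu (u (tauOf n r x)) (r (tauOf n r x)) (gAlloc u r (tauOf n r x - 1))) := by
    rw [totalVal, totalVal, ← Finset.sum_add_distrib]
    exact Finset.sum_le_sum key
  -- conversion to sums over times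
  have hBconv : ∀ u0 ∈ U,
      (∑ x ∈ allocOf Ω u0 \ allocOf (gAlloc u r n) u0,
        margP Zu u0 x (gAlloc u r (tauOf n r x - 1)))
      = ∑ t ∈ Finset.Icc 1 n,
          if r t ∈ allocOf Ω u0 \ allocOf (gAlloc u r n) u0
          then margP Zu u0 (r t) (gAlloc u r (t-1)) else 0 := by
    intro u0 _
    have hS : ∀ x ∈ allocOf Ω u0 \ allocOf (gAlloc u r n) u0,
        ∃ t, t ∈ Finset.Icc 1 n ∧ r t = x := by
      intro x hx
      have hxR : x ∈ R := hΩsubR u0 (Finset.mem_sdiff.mp hx).1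
      rw [← hr_img] at hxR
      obtain ⟨t, ht, hrt⟩ := Finset.mem_image.mp hxR
      exact ⟨t, ht, hrt⟩
    rw [sum_over_subset hr_inj _ hS, Finset.sum_filter]
    apply Finset.sum_congr rfl
    intro t ht
    by_cases h : r t ∈ allocOf Ω u0 \ allocOf (gAlloc u r n) u0
    · rw [if_pos h, if_pos h, tauOf_eq hr_inj ht]
    · rw [if_neg h, if_neg h]
  have hDconv : ∀ u0 ∈ U,
      (∑ x ∈ allocOf (gAlloc u r n) u0 \ allocOf Ω u0,
        (1 - c (tauOf n r x)) *
          margP Zu (u (tauOf n r x)) (r (tauOf n r x)) (gAlloc u r (tauOf n r x - 1)))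
      = ∑ t ∈ Finset.Icc 1 n,
          if r t ∈ allocOf (gAlloc u r n) u0 \ allocOf Ω u0
          then (1 - c t) * margP Zu (u t) (r t) (gAlloc u r (t-1)) else 0 := by
    intro u0 _
    have hS : ∀ x ∈ allocOf (gAlloc u r n) u0 \ allocOf Ω u0,
        ∃ t, t ∈ Finset.Icc 1 n ∧ r t = x := by
      intro x hx
      have hxR : x ∈ R := hGsubR n le_rfl u0 (Finset.mem_sdiff.mp hx).1
      rw [← hr_img] at hxR
      obtain ⟨t, ht, hrt⟩ := Finset.mem_image.mp hxR
      exact ⟨t, ht, hrt⟩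
    rw [sum_over_subset hr_inj _ hS, Finset.sum_filter]
    apply Finset.sum_congr rfl
    intro t ht
    by_cases h : r t ∈ allocOf (gAlloc u r n) u0 \ allocOf Ω u0
    · rw [if_pos h, if_pos h, tauOf_eq hr_inj ht]
    · rw [if_neg h, if_neg h]
  have hswap : ∑ u0 ∈ U, ((∑ x ∈ allocOf Ω u0 \ allocOf (gAlloc u r n) u0,
          margP Zu u0 x (gAlloc u r (tauOf n r x - 1)))
        - ∑ x ∈ allocOf (gAlloc u r n) u0 \ allocOf Ω u0,
            (1 - c (tauOf n r x)) *
              margP Zu (u (tauOf n r x)) (r (tauOf n r x)) (gAlloc u r (tauOf n r x - 1)))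
      = ∑ t ∈ Finset.Icc 1 n, ∑ u0 ∈ U,
          ((if r t ∈ allocOf Ω u0 \ allocOf (gAlloc u r n) u0
            then margP Zu u0 (r t) (gAlloc u r (t-1)) else 0)
          - (if r t ∈ allocOf (gAlloc u r n) u0 \ allocOf Ω u0
             then (1 - c t) * margP Zu (u t) (r t) (gAlloc u r (t-1)) else 0)) := by
    rw [Finset.sum_congr rfl (fun u0 hu0 => by
      rw [hBconv u0 hu0, hDconv u0 hu0, ← Finset.sum_sub_distrib])]
    exact Finset.sum_comm
  -- per-time bound on the inner sum
  have hinner : ∀ t ∈ Finset.Icc 1 n,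
      (∑ u0 ∈ U,
          ((if r t ∈ allocOf Ω u0 \ allocOf (gAlloc u r n) u0
            then margP Zu u0 (r t) (gAlloc u r (t-1)) else 0)
          - (if r t ∈ allocOf (gAlloc u r n) u0 \ allocOf Ω u0
             then (1 - c t) * margP Zu (u t) (r t) (gAlloc u r (t-1)) else 0)))
      ≤ (max 1 Λ - 1) * margP Zu (u t) (r t) (gAlloc u r (t-1)) := by
    intro t ht
    have hmax1 : (0:ℝ) ≤ max 1 Λ - 1 := by
      have := le_max_left (1:ℝ) Λ; linarith
    by_cases hwt : wOf Ω (u 0) (r t) = u t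
    · have hz : ∀ u0 ∈ U,
          ((if r t ∈ allocOf Ω u0 \ allocOf (gAlloc u r n) u0
            then margP Zu u0 (r t) (gAlloc u r (t-1)) else 0)
          - (if r t ∈ allocOf (gAlloc u r n) u0 \ allocOf Ω u0
             then (1 - c t) * margP Zu (u t) (r t) (gAlloc u r (t-1)) else 0)) = 0 := by
        intro u0 _
        rw [if_neg, if_neg, sub_zero]
        · rw [Finset.mem_sdiff]
          rintro ⟨h1, h2⟩
          have hu0w : u0 = wOf Ω (u 0) (r t) := ((hmemG t ht u0).mp h1).symm.trans hwt.symm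
          exact h2 ((hmemΩr t ht u0).mpr hu0w)
        · rw [Finset.mem_sdiff]
          rintro ⟨h1, h2⟩
          have hu0w : u0 = wOf Ω (u 0) (r t) := (hmemΩr t ht u0).mp h1
          exact h2 ((hmemG t ht u0).mpr (hwt.symm.trans hu0w.symm))
      rw [Finset.sum_eq_zero hz]
      exact mul_nonneg hmax1 (hρ0 t ht)
    · have hne : wOf Ω (u 0) (r t) ≠ u t := hwt
      have e1 : (∑ u0 ∈ U, (if r t ∈ allocOf Ω u0 \ allocOf (gAlloc u r n) u0
            then margP Zu u0 (r t) (gAlloc u r (t-1)) else 0))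
          = margP Zu (wOf Ω (u 0) (r t)) (r t) (gAlloc u r (t-1)) := by
        rw [Finset.sum_congr rfl (g := fun u0 =>
            if u0 = wOf Ω (u 0) (r t) then margP Zu u0 (r t) (gAlloc u r (t-1)) else 0)
          (fun u0 _ => by
            apply if_congr _ rfl rfl
            rw [Finset.mem_sdiff, hmemΩr t ht u0, hmemG t ht u0]
            constructor
            · exact fun h => h.1
            · intro h
              exact ⟨h, fun hu => hne (by rw [← h]; exact hu.symm)⟩)]
        rw [Finset.sum_ite_eq' U (wOf Ω (u 0) (r t))
          (fun u0 => margP Zu u0 (r t) (gAlloc u r (t-1))), if_pos (hwU t ht)]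
      have e2 : (∑ u0 ∈ U, (if r t ∈ allocOf (gAlloc u r n) u0 \ allocOf Ω u0
            then (1 - c t) * margP Zu (u t) (r t) (gAlloc u r (t-1)) else 0))
          = (1 - c t) * margP Zu (u t) (r t) (gAlloc u r (t-1)) := by
        rw [Finset.sum_congr rfl (g := fun u0 =>
            if u0 = u t then (1 - c t) * margP Zu (u t) (r t) (gAlloc u r (t-1)) else 0)
          (fun u0 _ => by
            apply if_congr _ rfl rfl
            rw [Finset.mem_sdiff, hmemG t ht u0, hmemΩr t ht u0]
            constructor
            · exact fun h => h.1.symm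
            · intro h
              refine ⟨h.symm, fun hw => hne ?_⟩
              rw [← hw, h])]
        rw [Finset.sum_ite_eq' U (u t)
          (fun _ => (1 - c t) * margP Zu (u t) (r t) (gAlloc u r (t-1))),
          if_pos (hu_mem t ht)]
      rw [Finset.sum_sub_distrib, e1, e2]
      have hdin := hdisc t ht (wOf Ω (u 0) (r t)) (hwU t ht) hne
      have hd1 := hd t ht
      have hd0 : (0:ℝ) < d t := lt_of_lt_of_le one_pos hd1
      have hρt := hρ0 t ht
      have h1 : margP Zu (wOf Ω (u 0) (r t)) (r t) (gAlloc u r (t-1))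
          ≤ margP Zu (u t) (r t) (gAlloc u r (t-1)) / d t := by
        rw [le_div_iff₀ hd0]
        calc margP Zu (wOf Ω (u 0) (r t)) (r t) (gAlloc u r (t-1)) * d t
            = d t * margP Zu (wOf Ω (u 0) (r t)) (r t) (gAlloc u r (t-1)) := mul_comm _ _
          _ ≤ _ := hdin
      have h2 : (c t + 1 / d t) * margP Zu (u t) (r t) (gAlloc u r (t-1))
          ≤ max 1 Λ * margP Zu (u t) (r t) (gAlloc u r (t-1)) :=
        mul_le_mul_of_nonneg_right ((hΛ t ht).trans (le_max_right 1 Λ)) hρt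
      have e3 : (1 / d t) * margP Zu (u t) (r t) (gAlloc u r (t-1))
          = margP Zu (u t) (r t) (gAlloc u r (t-1)) / d t :=
        one_div_mul_eq_div _ _
      nlinarith [h1, h2, e3, hρt]
  -- final assembly
  have hfinal : (∑ t ∈ Finset.Icc 1 n, ∑ u0 ∈ U,
          ((if r t ∈ allocOf Ω u0 \ allocOf (gAlloc u r n) u0
            then margP Zu u0 (r t) (gAlloc u r (t-1)) else 0)
          - (if r t ∈ allocOf (gAlloc u r n) u0 \ allocOf Ω u0
             then (1 - c t) * margP Zu (u t) (r t) (gAlloc u r (t-1)) else 0)))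
      ≤ ∑ t ∈ Finset.Icc 1 n, (max 1 Λ - 1) * margP Zu (u t) (r t) (gAlloc u r (t-1)) :=
    Finset.sum_le_sum hinner
  have htel' := htel n le_rfl
  have hmulsum : ∑ t ∈ Finset.Icc 1 n, (max 1 Λ - 1) * margP Zu (u t) (r t) (gAlloc u r (t-1))
      = (max 1 Λ - 1) * totalVal U Zu (gAlloc u r n) := by
    rw [htel', Finset.mul_sum]
  rw [hswap] at hsum1
  calc totalVal U Zu Ω
      ≤ totalVal U Zu (gAlloc u r n) + (∑ t ∈ Finset.Icc 1 n, ∑ u0 ∈ U,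
          ((if r t ∈ allocOf Ω u0 \ allocOf (gAlloc u r n) u0
            then margP Zu u0 (r t) (gAlloc u r (t-1)) else 0)
          - (if r t ∈ allocOf (gAlloc u r n) u0 \ allocOf Ω u0
             then (1 - c t) * margP Zu (u t) (r t) (gAlloc u r (t-1)) else 0))) := hsum1
    _ ≤ totalVal U Zu (gAlloc u r n) + (max 1 Λ - 1) * totalVal U Zu (gAlloc u r n) := by
        rw [← hmulsum]; linarith [hfinal]
    _ = max 1 Λ * totalVal U Zu (gAlloc u r n) := by ring
end
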